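/- Define ‖X‖ := |e1·‖X₁‖_V + e2·‖X₂‖_V|₃ on the free T-module M, where X = e1·X₁ + e2·X₂ and ‖·‖_V is the norm from the scalar product on V. Then ‖X‖ = ((‖X₁‖² + ‖X₂‖²)/2)^{1/2}, ‖X‖ = 0 iff X = 0, ‖X + Y‖ ≤ ‖X‖ + ‖Y‖, ‖α·X‖ = |α|·‖X‖ for α ∈ ℂ(i1), and ‖α·X‖ ≤ √2·|α|₃·‖X‖ for all α ∈ T; hence d(X,Y) = ‖X - Y‖ is a metric on M. -/

import Mathlib

/-- Bicomplex numbers `w = z1 + z2·i2` with `z1, z2 ∈ ℂ(i1)`. -/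
@[ext] structure Bc where
  z1 : ℂ
  z2 : ℂ

namespace Bc

instance : Add Bc := ⟨fun a b => ⟨a.z1 + b.z1, a.z2 + b.z2⟩⟩
instance : Mul Bc := ⟨fun a b => ⟨a.z1 * b.z1 - a.z2 * b.z2, a.z1 * b.z2 + a.z2 * b.z1⟩⟩
instance : Neg Bc := ⟨fun a => ⟨-a.z1, -a.z2⟩⟩
instance : Zero Bc := ⟨⟨0, 0⟩⟩
instance : One Bc := ⟨⟨1, 0⟩⟩

@[simp] lemma add_def (a b : Bc) : a + b = ⟨a.z1 + b.z1, a.z2 + b.z2⟩ := rfl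
@[simp] lemma mul_def (a b : Bc) :
    a * b = ⟨a.z1 * b.z1 - a.z2 * b.z2, a.z1 * b.z2 + a.z2 * b.z1⟩ := rfl
@[simp] lemma neg_def (a : Bc) : -a = ⟨-a.z1, -a.z2⟩ := rfl
@[simp] lemma zero_def : (0 : Bc) = ⟨0, 0⟩ := rfl
@[simp] lemma one_def : (1 : Bc) = ⟨1, 0⟩ := rfl

instance : CommRing Bc where
  add_assoc a b c := by ext <;> simp <;> ring
  zero_add a := by ext <;> simp
  add_zero a := by ext <;> simp
  add_comm a b := by ext <;> simp <;> ring
  mul_assoc a b c := by ext <;> simp <;> ring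
  one_mul a := by ext <;> simp
  mul_one a := by ext <;> simp
  left_distrib a b c := by ext <;> simp <;> ring
  right_distrib a b c := by ext <;> simp <;> ring
  mul_comm a b := by ext <;> simp <;> ring
  neg_add_cancel a := by ext <;> simp
  zero_mul a := by ext <;> simp
  mul_zero a := by ext <;> simp
  nsmul := nsmulRec
  zsmul := zsmulRec

/-- The embedding of `ℂ(i1)` into the bicomplex numbers. -/
def ofC (z : ℂ) : Bc := ⟨z, 0⟩

def i1 : Bc := ⟨Complex.I, 0⟩
def i2 : Bc := ⟨0, 1⟩
def j : Bc := i1 * i2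

/-- idempotent `e1 = (1+j)/2`. -/
noncomputable def e1 : Bc := ofC (1/2) * (1 + j)
/-- idempotent `e2 = (1-j)/2`. -/
noncomputable def e2 : Bc := ofC (1/2) * (1 - j)

noncomputable def conj1 (w : Bc) : Bc := ⟨(starRingEnd ℂ) w.z1, (starRingEnd ℂ) w.z2⟩
def conj2 (w : Bc) : Bc := ⟨w.z1, -w.z2⟩
noncomputable def conj3 (w : Bc) : Bc := ⟨(starRingEnd ℂ) w.z1, -((starRingEnd ℂ) w.z2)⟩

/-- first idempotent component -/
def pi1 (w : Bc) : ℂ := w.z1 - w.z2 * Complex.I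
/-- second idempotent component -/
def pi2 (w : Bc) : ℂ := w.z1 + w.z2 * Complex.I

noncomputable def mod1 (w : Bc) : ℝ := Real.sqrt ‖w.z1 ^ 2 + w.z2 ^ 2‖
noncomputable def norm3 (w : Bc) : ℝ := Real.sqrt (‖w.z1‖ ^ 2 + ‖w.z2‖ ^ 2)

end Bc


open Bc

/-- Free `Bc`-module of rank `n` with the canonical basis. -/
abbrev M (n : ℕ) := Fin n → Bc

/-- The associated complex vector space `V`: elements with coordinates in `ℂ(i1)`. -/
def Vset (n : ℕ) : Set (M n) := {X | ∀ l, (X l).z2 = 0}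

/-- First idempotent projection `P₁ : M → V`. -/
def P1 {n : ℕ} (X : M n) : M n := fun l => ofC (pi1 (X l))
/-- Second idempotent projection `P₂ : M → V`. -/
def P2 {n : ℕ} (X : M n) : M n := fun l => ofC (pi2 (X l))

/-- Norm on `V` induced by the scalar product. -/
noncomputable def nrmV {n : ℕ} (ip : M n → M n → Bc) (X : M n) : ℝ :=
  Real.sqrt ((ip X X).z1.re)

/-- Norm on `M`: `‖X‖ = |e1·‖X₁‖ + e2·‖X₂‖|₃`. -/
noncomputable def nrm {n : ℕ} (ip : M n → M n → Bc) (X : M n) : ℝ :=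
  norm3 (ofC ((nrmV ip (P1 X) : ℝ) : ℂ) * e1 + ofC ((nrmV ip (P2 X) : ℝ) : ℂ) * e2)



namespace Bc

@[simp] lemma ofC_z1 (a : ℂ) : (ofC a).z1 = a := rfl
@[simp] lemma ofC_z2 (a : ℂ) : (ofC a).z2 = 0 := rfl

lemma e1_eq : e1 = ⟨1/2, Complex.I/2⟩ := by
  ext <;> simp [e1, ofC, j, i1, i2] <;> ring

lemma e2_eq : e2 = ⟨1/2, -(Complex.I/2)⟩ := by
  ext <;> simp [e2, ofC, j, i1, i2, sub_eq_add_neg] <;> ring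

lemma conj3_add' (a b : Bc) : conj3 (a + b) = conj3 a + conj3 b := by
  ext <;> simp [conj3] <;> ring

lemma conj3_ofC_mul (t : ℝ) (w : Bc) :
    conj3 (ofC (t : ℂ) * w) = ofC (t : ℂ) * conj3 w := by
  ext <;> simp [conj3, Complex.conj_ofReal] <;> ring

lemma pi1_mul (v w : Bc) : pi1 (v * w) = pi1 v * pi1 w := by
  simp only [mul_def, pi1]
  linear_combination (-(v.z2 * w.z2) : ℂ) * Complex.I_sq

lemma pi2_mul (v w : Bc) : pi2 (v * w) = pi2 v * pi2 w := by
  simp only [mul_def, pi2]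
  linear_combination (-(v.z2 * w.z2) : ℂ) * Complex.I_sq

end Bc

section RealIneq

/-- Euclidean (ℓ²) triangle inequality in normalized form. -/
lemma l2_tri (p q r s : ℝ) (hp : 0 ≤ p) (hq : 0 ≤ q) (hr : 0 ≤ r) (hs : 0 ≤ s) :
    Real.sqrt (((p + q) ^ 2 + (r + s) ^ 2) / 2) ≤
      Real.sqrt ((p ^ 2 + r ^ 2) / 2) + Real.sqrt ((q ^ 2 + s ^ 2) / 2) := by
  set A := Real.sqrt ((p ^ 2 + r ^ 2) / 2) with hA
  set B := Real.sqrt ((q ^ 2 + s ^ 2) / 2) with hB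
  have hA0 : 0 ≤ A := Real.sqrt_nonneg _
  have hB0 : 0 ≤ B := Real.sqrt_nonneg _
  have hA2 : A ^ 2 = (p ^ 2 + r ^ 2) / 2 := Real.sq_sqrt (by positivity)
  have hB2 : B ^ 2 = (q ^ 2 + s ^ 2) / 2 := Real.sq_sqrt (by positivity)
  have hAB : (p * q + r * s) / 2 ≤ A * B := by
    have h1 : ((p * q + r * s) / 2) ^ 2 ≤ (A * B) ^ 2 := by
      have : (A * B) ^ 2 = (p ^ 2 + r ^ 2) / 2 * ((q ^ 2 + s ^ 2) / 2) := by
        rw [mul_pow, hA2, hB2]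
      rw [this]; nlinarith [sq_nonneg (p * s - r * q)]
    nlinarith [mul_nonneg hA0 hB0, mul_nonneg (mul_nonneg hp hq) (mul_nonneg hr hs),
      mul_nonneg hp hq, mul_nonneg hr hs]
  have key : ((p + q) ^ 2 + (r + s) ^ 2) / 2 ≤ (A + B) ^ 2 := by nlinarith
  calc Real.sqrt (((p + q) ^ 2 + (r + s) ^ 2) / 2) ≤ Real.sqrt ((A + B) ^ 2) :=
        Real.sqrt_le_sqrt key
    _ = A + B := Real.sqrt_sq (by positivity)

lemma l2_scale (c d a b : ℝ) (ha : 0 ≤ a) (hb : 0 ≤ b) :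
    Real.sqrt ((c ^ 2 * a ^ 2 + d ^ 2 * b ^ 2) / 2) ≤
      Real.sqrt (c ^ 2 + d ^ 2) * Real.sqrt ((a ^ 2 + b ^ 2) / 2) := by
  rw [← Real.sqrt_mul (by positivity)]
  apply Real.sqrt_le_sqrt
  nlinarith [sq_nonneg c, sq_nonneg d, sq_nonneg a, sq_nonneg b,
    mul_nonneg (sq_nonneg c) (sq_nonneg b), mul_nonneg (sq_nonneg d) (sq_nonneg a)]

end RealIneq

section ModuleHelpers

variable {n : ℕ}

lemma smul_apply' (α : Bc) (X : M n) (l : Fin n) : (α • X) l = α * X l := rfl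

lemma P1_mem (X : M n) : P1 X ∈ Vset n := fun _ => rfl
lemma P2_mem (X : M n) : P2 X ∈ Vset n := fun _ => rfl

lemma P1_add (X Y : M n) : P1 (X + Y) = P1 X + P1 Y := by
  funext l
  show ofC (pi1 (X l + Y l)) = ofC (pi1 (X l)) + ofC (pi1 (Y l))
  ext <;> simp [pi1, ofC] <;> ring

lemma P2_add (X Y : M n) : P2 (X + Y) = P2 X + P2 Y := by
  funext l
  show ofC (pi2 (X l + Y l)) = ofC (pi2 (X l)) + ofC (pi2 (Y l))
  ext <;> simp [pi2, ofC] <;> ring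

lemma P1_smul (α : Bc) (X : M n) : P1 (α • X) = ofC (pi1 α) • P1 X := by
  funext l
  show ofC (pi1 (α * X l)) = ofC (pi1 α) * ofC (pi1 (X l))
  rw [pi1_mul]; ext <;> simp [ofC]

lemma P2_smul (α : Bc) (X : M n) : P2 (α • X) = ofC (pi2 α) • P2 X := by
  funext l
  show ofC (pi2 (α * X l)) = ofC (pi2 α) * ofC (pi2 (X l))
  rw [pi2_mul]; ext <;> simp [ofC]

lemma eq_zero_of_P (X : M n) (h1 : P1 X = 0) (h2 : P2 X = 0) : X = 0 := by
  funext l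
  have e1' : pi1 (X l) = 0 := congrArg Bc.z1 (congrFun h1 l)
  have e2' : pi2 (X l) = 0 := congrArg Bc.z1 (congrFun h2 l)
  simp only [pi1, pi2] at e1' e2'
  have hz2 : 2 * (X l).z2 * Complex.I = 0 := by linear_combination e2' - e1'
  have hz2' : (X l).z2 = 0 := by
    simpa [Complex.I_ne_zero] using hz2
  have hz1 : (X l).z1 = 0 := by rw [hz2'] at e1'; simpa using e1'
  show X l = 0
  ext <;> simp [hz1, hz2']

lemma P1_zero : P1 (0 : M n) = 0 := by
  funext l; show ofC (pi1 (0 : Bc)) = 0; ext <;> simp [pi1, ofC]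

lemma P2_zero : P2 (0 : M n) = 0 := by
  funext l; show ofC (pi2 (0 : Bc)) = 0; ext <;> simp [pi2, ofC]

/-- The `‖·‖ = √((a² + b²)/2)` formula. -/
lemma nrm_formula (ip : M n → M n → Bc) (X : M n) :
    nrm ip X = Real.sqrt ((nrmV ip (P1 X) ^ 2 + nrmV ip (P2 X) ^ 2) / 2) := by
  set a := nrmV ip (P1 X)
  set b := nrmV ip (P2 X)
  have h : (ofC ((a : ℝ) : ℂ) * e1 + ofC ((b : ℝ) : ℂ) * e2 : Bc)
      = ⟨(((a + b) / 2 : ℝ) : ℂ), (((a - b) / 2 : ℝ) : ℂ) * Complex.I⟩ := by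
    ext <;> simp [e1_eq, e2_eq] <;> push_cast <;> ring
  show norm3 _ = _
  rw [h]
  simp only [norm3, norm_mul, Complex.norm_real, Real.norm_eq_abs, Complex.norm_I, mul_one, sq_abs]
  congr 1
  ring

end ModuleHelpers

section IPHelpers

variable {n : ℕ} {ip : M n → M n → Bc}

lemma ip_add_left (h_add : ∀ X Y₁ Y₂ : M n, ip X (Y₁ + Y₂) = ip X Y₁ + ip X Y₂)
    (h_conj : ∀ X Y : M n, ip X Y = conj3 (ip Y X)) (X Y Z : M n) :
    ip (X + Y) Z = ip X Z + ip Y Z := by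
  calc ip (X + Y) Z = conj3 (ip Z (X + Y)) := h_conj _ _
    _ = conj3 (ip Z X) + conj3 (ip Z Y) := by rw [h_add, conj3_add']
    _ = ip X Z + ip Y Z := by rw [← h_conj, ← h_conj]

lemma ip_smul_left (h_smul : ∀ (α : Bc) (X Y : M n), ip X (α • Y) = α * ip X Y)
    (h_conj : ∀ X Y : M n, ip X Y = conj3 (ip Y X)) (t : ℝ) (X Y : M n) :
    ip (ofC (t : ℂ) • X) Y = ofC (t : ℂ) * ip X Y := by
  calc ip (ofC (t : ℂ) • X) Y = conj3 (ip Y (ofC (t : ℂ) • X)) := h_conj _ _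
    _ = conj3 (ofC (t : ℂ) * ip Y X) := by rw [h_smul]
    _ = ofC (t : ℂ) * conj3 (ip Y X) := conj3_ofC_mul _ _
    _ = ofC (t : ℂ) * ip X Y := by rw [← h_conj]

lemma ipXX_real (h_closed : ∀ X Y : M n, X ∈ Vset n → Y ∈ Vset n → (ip X Y).z2 = 0)
    (h_pos : ∀ X : M n, ∃ a b : ℝ, 0 ≤ a ∧ 0 ≤ b ∧
      ip X X = ofC (a : ℂ) * e1 + ofC (b : ℂ) * e2)
    {X : M n} (hX : X ∈ Vset n) :
    ∃ c : ℝ, 0 ≤ c ∧ ip X X = ofC (c : ℂ) := by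
  obtain ⟨a, b, ha, hb, hab⟩ := h_pos X
  have h2 := h_closed X X hX hX
  rw [hab] at h2
  simp [e1_eq, e2_eq] at h2
  have hba : (a : ℂ) - b = 0 := by
    have hI : ((a : ℂ) - b) * (Complex.I / 2) = 0 := by linear_combination h2
    rcases mul_eq_zero.1 hI with h | h
    · exact h
    · exact absurd h (by simp [Complex.I_ne_zero])
  have hab' : a = b := by
    have : (a : ℂ) = b := by linear_combination hba
    exact_mod_cast this
  refine ⟨a, ha, ?_⟩
  rw [hab, ← hab']
  ext <;> simp [e1_eq, e2_eq] <;> ring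

lemma nrmV_sq (h_closed : ∀ X Y : M n, X ∈ Vset n → Y ∈ Vset n → (ip X Y).z2 = 0)
    (h_pos : ∀ X : M n, ∃ a b : ℝ, 0 ≤ a ∧ 0 ≤ b ∧
      ip X X = ofC (a : ℂ) * e1 + ofC (b : ℂ) * e2)
    {X : M n} (hX : X ∈ Vset n) :
    nrmV ip X ^ 2 = (ip X X).z1.re ∧ 0 ≤ (ip X X).z1.re := by
  obtain ⟨c, hc, hEq⟩ := ipXX_real h_closed h_pos hX
  have hre : (ip X X).z1.re = c := by rw [hEq]; simp
  constructor
  · rw [nrmV, hre, Real.sq_sqrt hc]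
  · rw [hre]; exact hc

lemma nrmV_nonneg (X : M n) : 0 ≤ nrmV ip X := Real.sqrt_nonneg _

lemma nrmV_eq_zero_iff (h_def : ∀ X : M n, ip X X = 0 ↔ X = 0)
    (h_closed : ∀ X Y : M n, X ∈ Vset n → Y ∈ Vset n → (ip X Y).z2 = 0)
    (h_pos : ∀ X : M n, ∃ a b : ℝ, 0 ≤ a ∧ 0 ≤ b ∧
      ip X X = ofC (a : ℂ) * e1 + ofC (b : ℂ) * e2)
    {X : M n} (hX : X ∈ Vset n) :
    nrmV ip X = 0 ↔ X = 0 := by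
  obtain ⟨c, hc, hEq⟩ := ipXX_real h_closed h_pos hX
  constructor
  · intro h
    rw [nrmV, hEq] at h
    simp only [ofC_z1, Complex.ofReal_re] at h
    have hc0 : c = 0 := by
      have := Real.sqrt_eq_zero hc |>.mp h
      exact this
    rw [← h_def]
    rw [hEq, hc0]
    ext <;> simp [ofC]
  · intro h
    subst h
    have h0 : ip (0 : M n) 0 = 0 := (h_def 0).mpr rfl
    rw [nrmV, h0]
    simp

lemma cs_re (h_add : ∀ X Y₁ Y₂ : M n, ip X (Y₁ + Y₂) = ip X Y₁ + ip X Y₂)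
    (h_smul : ∀ (α : Bc) (X Y : M n), ip X (α • Y) = α * ip X Y)
    (h_conj : ∀ X Y : M n, ip X Y = conj3 (ip Y X))
    (h_closed : ∀ X Y : M n, X ∈ Vset n → Y ∈ Vset n → (ip X Y).z2 = 0)
    (h_pos : ∀ X : M n, ∃ a b : ℝ, 0 ≤ a ∧ 0 ≤ b ∧
      ip X X = ofC (a : ℂ) * e1 + ofC (b : ℂ) * e2)
    {X Y : M n} (hX : X ∈ Vset n) (hY : Y ∈ Vset n) :
    (ip X Y).z1.re ≤ nrmV ip X * nrmV ip Y := by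
  set A := nrmV ip X with hA
  set B := nrmV ip Y with hB
  have hA0 : 0 ≤ A := Real.sqrt_nonneg _
  have hB0 : 0 ≤ B := Real.sqrt_nonneg _
  obtain ⟨hA2, _⟩ := nrmV_sq h_closed h_pos hX
  obtain ⟨hB2, _⟩ := nrmV_sq h_closed h_pos hY
  set R := (ip X Y).z1.re with hR
  have hYX : (ip Y X).z1.re = R := by
    rw [h_conj X Y] at hR
    simp only [conj3, Complex.conj_re] at hR
    exact hR.symm
  have key : ∀ t : ℝ, 0 ≤ B ^ 2 * t ^ 2 + 2 * R * t + A ^ 2 := by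
    intro t
    have hmem : X + ofC (t : ℂ) • Y ∈ Vset n := by
      intro l
      have := hX l
      have h2 := hY l
      show (X l + ofC (t : ℂ) * Y l).z2 = 0
      simp [this, h2, ofC]
    obtain ⟨c, hc, hEq⟩ := ipXX_real h_closed h_pos hmem
    have expand : ip (X + ofC (t : ℂ) • Y) (X + ofC (t : ℂ) • Y)
        = ip X X + ofC (t : ℂ) * ip X Y + ofC (t : ℂ) * ip Y X
          + ofC (t : ℂ) * (ofC (t : ℂ) * ip Y Y) := by
      rw [ip_add_left h_add h_conj, h_add, h_add, h_smul, h_smul,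
        ip_smul_left h_smul h_conj, ip_smul_left h_smul h_conj]
      ring
    have hre : c = A ^ 2 + 2 * t * R + t ^ 2 * B ^ 2 := by
      have h1 : (ip (X + ofC (t : ℂ) • Y) (X + ofC (t : ℂ) • Y)).z1.re = c := by
        rw [hEq]; simp
      rw [expand] at h1
      simp only [add_def, mul_def, ofC_z1, ofC_z2, zero_mul, mul_zero, sub_zero,
        add_zero, zero_add, Complex.add_re, Complex.mul_re, Complex.ofReal_re,
        Complex.ofReal_im, zero_mul, sub_zero] at h1
      rw [← h1, hA2, hB2, ← hR, hYX]
      ring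
    nlinarith [hc, hre]
  have key' : ∀ t : ℝ, 0 ≤ B ^ 2 * (t * t) + 2 * R * t + A ^ 2 := by
    intro t
    have := key t
    nlinarith [this]
  have hd := discrim_le_zero key'
  rw [discrim] at hd
  nlinarith [mul_nonneg hA0 hB0, sq_nonneg (A * B - R), sq_nonneg (A * B + R)]

lemma nrmV_add_le (h_add : ∀ X Y₁ Y₂ : M n, ip X (Y₁ + Y₂) = ip X Y₁ + ip X Y₂)
    (h_smul : ∀ (α : Bc) (X Y : M n), ip X (α • Y) = α * ip X Y)
    (h_conj : ∀ X Y : M n, ip X Y = conj3 (ip Y X))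
    (h_closed : ∀ X Y : M n, X ∈ Vset n → Y ∈ Vset n → (ip X Y).z2 = 0)
    (h_pos : ∀ X : M n, ∃ a b : ℝ, 0 ≤ a ∧ 0 ≤ b ∧
      ip X X = ofC (a : ℂ) * e1 + ofC (b : ℂ) * e2)
    {X Y : M n} (hX : X ∈ Vset n) (hY : Y ∈ Vset n) :
    nrmV ip (X + Y) ≤ nrmV ip X + nrmV ip Y := by
  set A := nrmV ip X with hA
  set B := nrmV ip Y with hB
  have hA0 : 0 ≤ A := Real.sqrt_nonneg _
  have hB0 : 0 ≤ B := Real.sqrt_nonneg _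
  obtain ⟨hA2, _⟩ := nrmV_sq h_closed h_pos hX
  obtain ⟨hB2, _⟩ := nrmV_sq h_closed h_pos hY
  have hXY : X + Y ∈ Vset n := by
    intro l
    show (X l + Y l).z2 = 0
    simp [hX l, hY l]
  obtain ⟨hS2, _⟩ := nrmV_sq h_closed h_pos hXY
  have hS0 : 0 ≤ nrmV ip (X + Y) := Real.sqrt_nonneg _
  set R := (ip X Y).z1.re with hR
  have hYX : (ip Y X).z1.re = R := by
    rw [h_conj X Y] at hR
    simp only [conj3, Complex.conj_re] at hR
    exact hR.symm
  have hRe : R ≤ A * B := cs_re h_add h_smul h_conj h_closed h_pos hX hY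
  have expand : (ip (X + Y) (X + Y)).z1.re = A ^ 2 + 2 * R + B ^ 2 := by
    rw [ip_add_left h_add h_conj, h_add, h_add]
    simp only [add_def, Complex.add_re]
    rw [hA2, hB2, ← hR, hYX]
    ring
  nlinarith [hS2, hS0]

lemma nrmV_smul (h_smul : ∀ (α : Bc) (X Y : M n), ip X (α • Y) = α * ip X Y)
    (h_conj : ∀ X Y : M n, ip X Y = conj3 (ip Y X))
    (h_closed : ∀ X Y : M n, X ∈ Vset n → Y ∈ Vset n → (ip X Y).z2 = 0)
    (h_pos : ∀ X : M n, ∃ a b : ℝ, 0 ≤ a ∧ 0 ≤ b ∧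
      ip X X = ofC (a : ℂ) * e1 + ofC (b : ℂ) * e2)
    (a : ℂ) {X : M n} (hX : X ∈ Vset n) :
    nrmV ip (ofC a • X) = ‖a‖ * nrmV ip X := by
  obtain ⟨c, hc, hEq⟩ := ipXX_real h_closed h_pos hX
  have key : ip (ofC a • X) (ofC a • X) = ofC ((Complex.normSq a * c : ℝ) : ℂ) := by
    rw [h_smul]
    have h1 : ip (ofC a • X) X = conj3 (ofC a * ip X X) := by
      rw [h_conj, h_smul]
    rw [h1, hEq]
    ext
    · simp only [mul_def, conj3, ofC_z1, ofC_z2, mul_zero, zero_mul, add_zero,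
        sub_zero, zero_add, neg_zero, map_zero, mul_neg, neg_neg]
      push_cast
      simp only [map_mul, Complex.conj_ofReal]
      linear_combination (c : ℂ) * Complex.mul_conj a
    · simp [conj3, ofC]
  rw [nrmV, nrmV, key, hEq]
  simp only [ofC_z1, Complex.ofReal_re]
  rw [Real.sqrt_mul (Complex.normSq_nonneg a), ← Complex.norm_def]

end IPHelpers

/-- Properties of the norm `‖X‖ = |e1‖X₁‖ + e2‖X₂‖|₃` on `M`, making `M` a metric
space with `d(X,Y) = ‖X - Y‖`. -/
theorem norm_on_M_properties (n : ℕ) (ip : M n → M n → Bc)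
    (h_add : ∀ X Y₁ Y₂ : M n, ip X (Y₁ + Y₂) = ip X Y₁ + ip X Y₂)
    (h_smul : ∀ (α : Bc) (X Y : M n), ip X (α • Y) = α * ip X Y)
    (h_conj : ∀ X Y : M n, ip X Y = conj3 (ip Y X))
    (h_def : ∀ X : M n, ip X X = 0 ↔ X = 0)
    (h_closed : ∀ X Y : M n, X ∈ Vset n → Y ∈ Vset n → (ip X Y).z2 = 0)
    (h_pos : ∀ X : M n, ∃ a b : ℝ, 0 ≤ a ∧ 0 ≤ b ∧
      ip X X = ofC (a : ℂ) * e1 + ofC (b : ℂ) * e2) :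
    (∀ X : M n, nrm ip X =
        Real.sqrt ((nrmV ip (P1 X) ^ 2 + nrmV ip (P2 X) ^ 2) / 2)) ∧
    (∀ X : M n, 0 ≤ nrm ip X) ∧
    (∀ X : M n, nrm ip X = 0 ↔ X = 0) ∧
    (∀ X Y : M n, nrm ip (X + Y) ≤ nrm ip X + nrm ip Y) ∧
    (∀ (a : ℂ) (X : M n), nrm ip (ofC a • X) = ‖a‖ * nrm ip X) ∧
    (∀ (α : Bc) (X : M n), nrm ip (α • X) ≤ Real.sqrt 2 * norm3 α * nrm ip X) ∧
    (∀ X Y : M n, (nrm ip (X - Y) = 0 ↔ X = Y)) ∧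
    (∀ X Y : M n, nrm ip (X - Y) = nrm ip (Y - X)) ∧
    (∀ X Y Z : M n, nrm ip (X - Z) ≤ nrm ip (X - Y) + nrm ip (Y - Z)) := by
  have hnn : ∀ X : M n, 0 ≤ nrm ip X := by
    intro X; rw [nrm_formula]; exact Real.sqrt_nonneg _
  have hzero : ∀ X : M n, nrm ip X = 0 ↔ X = 0 := by
    intro X
    rw [nrm_formula]
    constructor
    · intro h
      have h2 : (nrmV ip (P1 X) ^ 2 + nrmV ip (P2 X) ^ 2) / 2 = 0 :=
        (Real.sqrt_eq_zero (by positivity)).mp h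
      have ha : nrmV ip (P1 X) = 0 := by
        nlinarith [sq_nonneg (nrmV ip (P1 X)), sq_nonneg (nrmV ip (P2 X)),
          nrmV_nonneg (ip := ip) (P1 X)]
      have hb : nrmV ip (P2 X) = 0 := by
        nlinarith [sq_nonneg (nrmV ip (P1 X)), sq_nonneg (nrmV ip (P2 X)),
          nrmV_nonneg (ip := ip) (P2 X)]
      exact eq_zero_of_P X
        ((nrmV_eq_zero_iff h_def h_closed h_pos (P1_mem X)).mp ha)
        ((nrmV_eq_zero_iff h_def h_closed h_pos (P2_mem X)).mp hb)
    · intro h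
      subst h
      rw [P1_zero, P2_zero,
        (nrmV_eq_zero_iff h_def h_closed h_pos (fun l => rfl)).mpr rfl]
      simp
  have htri : ∀ X Y : M n, nrm ip (X + Y) ≤ nrm ip X + nrm ip Y := by
    intro X Y
    rw [nrm_formula, nrm_formula, nrm_formula, P1_add, P2_add]
    have t1 : nrmV ip (P1 X + P1 Y) ≤ nrmV ip (P1 X) + nrmV ip (P1 Y) :=
      nrmV_add_le h_add h_smul h_conj h_closed h_pos (P1_mem X) (P1_mem Y)
    have t2 : nrmV ip (P2 X + P2 Y) ≤ nrmV ip (P2 X) + nrmV ip (P2 Y) :=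
      nrmV_add_le h_add h_smul h_conj h_closed h_pos (P2_mem X) (P2_mem Y)
    have u1 : nrmV ip (P1 X + P1 Y) ^ 2 ≤ (nrmV ip (P1 X) + nrmV ip (P1 Y)) ^ 2 :=
      pow_le_pow_left₀ (nrmV_nonneg _) t1 2
    have u2 : nrmV ip (P2 X + P2 Y) ^ 2 ≤ (nrmV ip (P2 X) + nrmV ip (P2 Y)) ^ 2 :=
      pow_le_pow_left₀ (nrmV_nonneg _) t2 2
    have step : Real.sqrt ((nrmV ip (P1 X + P1 Y) ^ 2 + nrmV ip (P2 X + P2 Y) ^ 2) / 2)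
        ≤ Real.sqrt (((nrmV ip (P1 X) + nrmV ip (P1 Y)) ^ 2
          + (nrmV ip (P2 X) + nrmV ip (P2 Y)) ^ 2) / 2) :=
      Real.sqrt_le_sqrt (by linarith)
    exact le_trans step
      (l2_tri _ _ _ _ (nrmV_nonneg _) (nrmV_nonneg _) (nrmV_nonneg _) (nrmV_nonneg _))
  have hC : ∀ (a : ℂ) (X : M n), nrm ip (ofC a • X) = ‖a‖ * nrm ip X := by
    intro a X
    rw [nrm_formula, nrm_formula, P1_smul, P2_smul]
    have p1 : pi1 (ofC a) = a := by simp [pi1, ofC]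
    have p2 : pi2 (ofC a) = a := by simp [pi2, ofC]
    rw [p1, p2, nrmV_smul h_smul h_conj h_closed h_pos a (P1_mem X),
      nrmV_smul h_smul h_conj h_closed h_pos a (P2_mem X), mul_pow, mul_pow]
    rw [show (‖a‖ ^ 2 * nrmV ip (P1 X) ^ 2
        + ‖a‖ ^ 2 * nrmV ip (P2 X) ^ 2) / 2
        = ‖a‖ ^ 2 * ((nrmV ip (P1 X) ^ 2 + nrmV ip (P2 X) ^ 2) / 2) by ring,
      Real.sqrt_mul (sq_nonneg _), Real.sqrt_sq (norm_nonneg a)]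
  have hBc : ∀ (α : Bc) (X : M n), nrm ip (α • X) ≤ Real.sqrt 2 * norm3 α * nrm ip X := by
    intro α X
    rw [nrm_formula, nrm_formula, P1_smul, P2_smul,
      nrmV_smul h_smul h_conj h_closed h_pos _ (P1_mem X),
      nrmV_smul h_smul h_conj h_closed h_pos _ (P2_mem X), mul_pow, mul_pow]
    have hcd : Real.sqrt (‖pi1 α‖ ^ 2 + ‖pi2 α‖ ^ 2)
        = Real.sqrt 2 * norm3 α := by
      rw [norm3, ← Real.sqrt_mul (by norm_num : (0:ℝ) ≤ 2)]
      congr 1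
      simp only [Complex.sq_norm, Complex.normSq_apply, pi1, pi2, Complex.sub_re,
        Complex.sub_im, Complex.add_re, Complex.add_im, Complex.mul_re,
        Complex.mul_im, Complex.I_re, Complex.I_im]
      ring
    rw [← hcd]
    exact l2_scale _ _ _ _ (nrmV_nonneg _) (nrmV_nonneg _)
  have hsymm : ∀ X Y : M n, nrm ip (X - Y) = nrm ip (Y - X) := by
    intro X Y
    have h : Y - X = ofC (-1 : ℂ) • (X - Y) := by
      funext l
      show Y l - X l = ofC (-1 : ℂ) * (X l - Y l)
      have hofc : ofC (-1 : ℂ) = (-1 : Bc) := by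
        ext <;> simp [ofC]
      rw [hofc]; ring
    rw [h, hC (-1) (X - Y)]
    simp
  refine ⟨nrm_formula ip, hnn, hzero, htri, hC, hBc, ?_, hsymm, ?_⟩
  · intro X Y
    rw [hzero, sub_eq_zero]
  · intro X Y Z
    calc nrm ip (X - Z) = nrm ip ((X - Y) + (Y - Z)) := by rw [sub_add_sub_cancel]
      _ ≤ nrm ip (X - Y) + nrm ip (Y - Z) := htri _ _
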